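/- For all integers w, I, and α with α ≥ 0, w + α ≥ 0, and I ≥ 1, one has Q(w, 0, I, α) = 0. -/

import Mathlib

/-- The generalized binomial coefficient `C(a,b)` for integers `a`, `b`:
`C(a,b) = 0` if `b < 0`, and `C(a,b) = a(a-1)⋯(a-b+1)/b!` if `b ≥ 0`. -/
noncomputable def binom (a b : ℤ) : ℤ := if b < 0 then 0 else Ring.choose a b.toNat

/-- The integer `Q(w,t,I,α)` from Definition 3.1 of the paper (intended for `0 ≤ α`). -/
noncomputable def Q (w t I α : ℤ) : ℤ :=
  if α = 0 then
    -(∑ᶠ i : ℤ, binom (I - 1) (w - i) * binom (i + I - w - 2) i * binom t (I - i))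
    + (∑ᶠ i ∈ Set.Iic w,
        ((i + w + 1).negOnePow : ℤ) * binom (2 * i - w - 2 + t) (2 * i - w - 1) * binom t (I - i))
    + (∑ᶠ i ∈ Set.Iic w,
        ((i + w).negOnePow : ℤ) * binom (t + i - 1) i * binom t (I - i))
  else
    -(∑ᶠ i : ℤ, binom (I - 1) (w - i) * binom (i + I - w - 2) i * binom t (I - i - α))
    + (∑ᶠ i ∈ Set.Iic w,
        ((i + w + 1 + α).negOnePow : ℤ) * binom (2 * i - w - 2 + t + α) (2 * i - w - 1 + α) *
          binom t (I - i - α))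
    + (∑ i ∈ Finset.Icc (1 : ℤ) (α - 1),
        ((i + 1).negOnePow : ℤ) * binom (I - 1) (w + i) * binom (t + w + i) (I - α + i))

open Finset

lemma binom_of_neg {a b : ℤ} (h : b < 0) : binom a b = 0 := if_pos h

lemma binom_of_nonneg {a b : ℤ} (h : 0 ≤ b) : binom a b = Ring.choose a b.toNat :=
  if_neg (not_lt.2 h)

lemma binom_zero_right (a : ℤ) : binom a 0 = 1 := by
  rw [binom_of_nonneg le_rfl]; simpa using Ring.choose_zero_right a

lemma binom_natCast (n k : ℕ) : binom (n : ℤ) (k : ℤ) = (n.choose k : ℤ) := by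
  rw [binom_of_nonneg (by positivity)]
  simp [Ring.choose_natCast]

lemma binom_eq_choose {n k : ℤ} (hn : 0 ≤ n) (hk : 0 ≤ k) :
    binom n k = (n.toNat.choose k.toNat : ℤ) := by
  rw [← binom_natCast, Int.toNat_of_nonneg hn, Int.toNat_of_nonneg hk]

lemma binom_zero_left (b : ℤ) : binom 0 b = if b = 0 then 1 else 0 := by
  rcases lt_trichotomy b 0 with h | h | h
  · rw [binom_of_neg h, if_neg h.ne]
  · subst h; simp [binom_zero_right]
  · rw [binom_of_nonneg h.le, if_neg h.ne']
    rw [show (0 : ℤ) = ((0 : ℕ) : ℤ) by simp, Ring.choose_natCast,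
      Nat.choose_eq_zero_of_lt (by omega), Nat.cast_zero]

lemma binom_lt {n k : ℤ} (hn : 0 ≤ n) (h : n < k) : binom n k = 0 := by
  rw [binom_eq_choose hn (by omega), Nat.choose_eq_zero_of_lt (by omega), Nat.cast_zero]

lemma binom_self {n : ℤ} (hn : 0 ≤ n) : binom n n = 1 := by
  rw [binom_eq_choose hn hn]; simp

lemma binom_neg_one {m : ℤ} (h : 0 ≤ m) : binom (-1) m = (m.negOnePow : ℤ) := by
  rw [binom_of_nonneg h]
  rw [Ring.choose]
  rw [show ((-1 : ℤ) - (m.toNat : ℤ) + 1) = -(m.toNat : ℤ) by ring]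
  rw [Ring.multichoose_neg_self]
  rw [← Int.coe_negOnePow_natCast, Int.toNat_of_nonneg h]

lemma binom_symm {n k : ℤ} (hn : 0 ≤ n) : binom n k = binom n (n - k) := by
  rcases lt_trichotomy k 0 with h | h | h
  · rw [binom_of_neg h, binom_lt hn (by omega)]
  · subst h; simp [binom_zero_right, binom_self hn]
  · rcases le_or_gt k n with h2 | h2
    · rw [binom_eq_choose hn h.le, binom_eq_choose hn (by omega)]
      rw [show (n - k).toNat = n.toNat - k.toNat by omega]
      rw [Nat.choose_symm (by omega)]
    · rw [binom_lt hn h2, binom_of_neg (by omega)]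

lemma binom_trinom {n j k : ℤ} (hn : 0 ≤ n) :
    binom n j * binom j k = binom n k * binom (n - k) (j - k) := by
  rcases lt_or_ge k 0 with hk | hk
  · rw [binom_of_neg hk, binom_of_neg hk, mul_zero, zero_mul]
  rcases lt_or_ge j k with hjk | hjk
  · rw [binom_of_neg (show j - k < 0 by omega), mul_zero]
    rcases lt_or_ge j 0 with hj | hj
    · rw [binom_of_neg hj, zero_mul]
    · rw [binom_lt hj hjk, mul_zero]
  rcases lt_or_ge n j with hnj | hnj
  · rw [binom_lt hn hnj, zero_mul]
    rcases lt_or_ge n k with hnk | hnk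
    · rw [binom_lt hn hnk, zero_mul]
    · rw [binom_lt (show (0:ℤ) ≤ n - k by omega) (show n - k < j - k by omega), mul_zero]
  · rw [binom_eq_choose hn (by omega), binom_eq_choose (by omega) hk,
      binom_eq_choose hn hk, binom_eq_choose (by omega) (by omega)]
    have h := Nat.choose_mul (n := n.toNat) (show k.toNat ≤ j.toNat by omega)
    rw [show (n - k).toNat = n.toNat - k.toNat by omega,
      show (j - k).toNat = j.toNat - k.toNat by omega]
    exact_mod_cast h

lemma binom_pascal (n : ℤ) {k : ℤ} (hk : 0 ≤ k) :
    binom (n + 1) (k + 1) = binom n k + binom n (k + 1) := by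
  rw [binom_of_nonneg (by omega), binom_of_nonneg hk, binom_of_nonneg (by omega),
    show (k + 1).toNat = k.toNat + 1 by omega, Ring.choose_succ_succ]

lemma alt_sum (N : ℤ) (a : ℤ) :
    ∑ m ∈ Icc (0 : ℤ) a, (m.negOnePow : ℤ) * binom N m
      = (a.negOnePow : ℤ) * binom (N - 1) a := by
  rcases lt_or_ge a 0 with ha | ha
  · rw [Finset.Icc_eq_empty (by omega), Finset.sum_empty, binom_of_neg ha, mul_zero]
  · suffices H : ∀ s : ℕ, ∑ m ∈ Icc (0 : ℤ) (s : ℤ), (m.negOnePow : ℤ) * binom N m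
        = (((s : ℤ)).negOnePow : ℤ) * binom (N - 1) (s : ℤ) by
      have := H a.toNat
      rwa [Int.toNat_of_nonneg ha] at this
    intro s
    induction s with
    | zero => simp [binom_zero_right]
    | succ s ih =>
        push_cast
        rw [show Icc (0:ℤ) ((s:ℤ)+1) = insert ((s:ℤ)+1) (Icc 0 (s:ℤ)) by
          ext x; simp only [Finset.mem_Icc, Finset.mem_insert]; omega]
        rw [Finset.sum_insert (by simp), ih]
        have hp := binom_pascal (N - 1) (show (0:ℤ) ≤ (s:ℤ) by positivity)
        rw [show N - 1 + 1 = N by ring] at hp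
        rw [hp, Int.negOnePow_succ]
        push_cast
        ring

lemma finsum_single (f : ℤ → ℤ) (i₀ : ℤ) (h : ∀ x, x ≠ i₀ → f x = 0) :
    ∑ᶠ i, f i = f i₀ :=
  finsum_eq_single f i₀ h

lemma finsum_Iic (f : ℤ → ℤ) (w i₀ : ℤ) (h : ∀ x, x ≠ i₀ → f x = 0) :
    (∑ᶠ i ∈ Set.Iic w, f i) = if i₀ ≤ w then f i₀ else 0 := by
  rw [finsum_mem_def,
    finsum_eq_single _ i₀ (fun x hx => by simp [Set.indicator_apply, h x hx])]
  by_cases hw : i₀ ≤ w <;> simp [Set.indicator_apply, Set.mem_Iic, hw]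

lemma sum_Icc_split (f : ℤ → ℤ) (c d : ℤ) (h0 : ∀ m, m < 0 → f m = 0)
    (hd : 0 ≤ d) (hcd : c ≤ d + 1) :
    ∑ m ∈ Icc c d, f m = ∑ m ∈ Icc 0 d, f m - ∑ m ∈ Icc 0 (c - 1), f m := by
  rcases le_or_gt c 0 with hc | hc
  · rw [Finset.Icc_eq_empty (show ¬ (0:ℤ) ≤ c - 1 by omega), Finset.sum_empty, sub_zero]
    rw [Finset.sum_subset (show Icc (0:ℤ) d ⊆ Icc c d by
      intro x hx; simp only [Finset.mem_Icc] at *; omega)]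
    intro x hx hx'
    simp only [Finset.mem_Icc] at hx hx'
    exact h0 x (by omega)
  · have h1 : Icc (0:ℤ) (c-1) = Ico (0:ℤ) c := by
      ext x; simp only [Finset.mem_Icc, Finset.mem_Ico]; omega
    have h2 : Icc (c:ℤ) d = Ico c (d+1) := by
      ext x; simp only [Finset.mem_Icc, Finset.mem_Ico]; omega
    have h3 : Icc (0:ℤ) d = Ico (0:ℤ) (d+1) := by
      ext x; simp only [Finset.mem_Icc, Finset.mem_Ico]; omega
    rw [h1, h2, h3]
    have hs : ∑ m ∈ Ico (0:ℤ) c, f m + ∑ m ∈ Ico c (d+1), f m = ∑ m ∈ Ico (0:ℤ) (d+1), f m := by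
      rw [← Finset.sum_union (by
        apply Finset.Ico_disjoint_Ico_consecutive)]
      rw [Finset.Ico_union_Ico_eq_Ico (by omega) (by omega)]
    linarith [hs]

theorem Q_zero_t (w I α : ℤ) (hα : 0 ≤ α) (hwα : 0 ≤ w + α) (hI : 1 ≤ I) :
    Q w 0 I α = 0 := by
  rcases eq_or_lt_of_le hα with h0 | hpos
  · -- α = 0
    obtain rfl : α = 0 := h0.symm
    rw [Q, if_pos rfl]
    have e1 : (∑ᶠ i : ℤ, binom (I - 1) (w - i) * binom (i + I - w - 2) i * binom 0 (I - i))
        = binom (I - 1) (w - I) * binom (I + I - w - 2) I * binom 0 (I - I) :=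
      finsum_single _ I (fun x hx => by
        rw [binom_zero_left, if_neg (by omega), mul_zero])
    have e2 : (∑ᶠ i ∈ Set.Iic w,
          ((i + w + 1).negOnePow : ℤ) * binom (2 * i - w - 2 + 0) (2 * i - w - 1)
            * binom 0 (I - i))
        = if I ≤ w then ((I + w + 1).negOnePow : ℤ) * binom (2 * I - w - 2 + 0) (2 * I - w - 1)
            * binom 0 (I - I) else 0 :=
      finsum_Iic _ w I (fun x hx => by
        rw [binom_zero_left, if_neg (by omega), mul_zero])
    have e3 : (∑ᶠ i ∈ Set.Iic w,
          ((i + w).negOnePow : ℤ) * binom (0 + i - 1) i * binom 0 (I - i))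
        = if I ≤ w then ((I + w).negOnePow : ℤ) * binom (0 + I - 1) I * binom 0 (I - I) else 0 :=
      finsum_Iic _ w I (fun x hx => by
        rw [binom_zero_left, if_neg (by omega), mul_zero])
    rw [e1, e2, e3]
    rw [show (0:ℤ) + I - 1 = I - 1 by ring,
      show binom (I - 1) I = 0 from binom_lt (by omega) (by omega)]
    rw [sub_self, binom_zero_right, mul_one]
    rcases eq_or_ne w (2 * I - 1) with hw | hw
    · have c1 : binom (I - 1) (w - I) = 1 := by
        rw [show w - I = I - 1 by omega]; exact binom_self (by omega)
      have c2 : binom (I + I - w - 2) I = (I.negOnePow : ℤ) := by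
        rw [show I + I - w - 2 = -1 by omega]; exact binom_neg_one (by omega)
      have c3 : binom (2 * I - w - 2 + 0) (2 * I - w - 1) = 1 := by
        rw [show 2 * I - w - 1 = 0 by omega]; exact binom_zero_right _
      rw [c1, c2, c3, if_pos (show I ≤ w by omega), if_pos (show I ≤ w by omega)]
      have hsgn : ((I + w + 1).negOnePow : ℤ) = (I.negOnePow : ℤ) := by
        rw [show I + w + 1 = I + 2 * I by omega, Int.negOnePow_add, Int.negOnePow_two_mul]
        simp
      rw [hsgn]
      ring
    · have c2 : binom (2 * I - w - 2 + 0) (2 * I - w - 1) = 0 := by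
        rcases lt_or_ge (2 * I - w - 1) 0 with h | h
        · exact binom_of_neg h
        · exact binom_lt (by omega) (by omega)
      have c1 : binom (I - 1) (w - I) * binom (I + I - w - 2) I = 0 := by
        rcases lt_or_ge (w - I) 0 with h | h
        · rw [binom_of_neg h, zero_mul]
        · rcases lt_or_ge (I - 1) (w - I) with h2 | h2
          · rw [binom_lt (by omega) h2, zero_mul]
          · rw [show binom (I + I - w - 2) I = 0 from binom_lt (by omega) (by omega), mul_zero]
      rw [c1, c2, neg_zero, zero_add]
      by_cases hw2 : I ≤ w <;> simp [hw2]
  · -- 1 ≤ α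
    have hα1 : 1 ≤ α := hpos
    rw [Q, if_neg (by omega)]
    have e1 : (∑ᶠ i : ℤ, binom (I - 1) (w - i) * binom (i + I - w - 2) i * binom 0 (I - i - α))
        = binom (I - 1) (w - (I - α)) * binom (I - α + I - w - 2) (I - α)
            * binom 0 (I - (I - α) - α) :=
      finsum_single _ (I - α) (fun x hx => by
        rw [binom_zero_left, if_neg (by omega), mul_zero])
    have e2 : (∑ᶠ i ∈ Set.Iic w,
          ((i + w + 1 + α).negOnePow : ℤ) * binom (2 * i - w - 2 + 0 + α) (2 * i - w - 1 + α) *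
            binom 0 (I - i - α))
        = if I - α ≤ w then
            ((I - α + w + 1 + α).negOnePow : ℤ) *
              binom (2 * (I - α) - w - 2 + 0 + α) (2 * (I - α) - w - 1 + α) *
              binom 0 (I - (I - α) - α)
          else 0 :=
      finsum_Iic _ w (I - α) (fun x hx => by
        rw [binom_zero_left, if_neg (by omega), mul_zero])
    -- per-term rewriting of the third sum
    have key : ∀ i : ℤ, ((i + 1).negOnePow : ℤ) * binom (I - 1) (w + i) *
          binom (0 + w + i) (I - α + i)
        = binom (I - 1) (w + α - I) *
            (((i + 1).negOnePow : ℤ) * binom (2 * I - w - α - 1) (i + I - α)) := by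
      intro i
      have hb : binom (I - 1) (w + i) * binom (w + i) (I - α + i)
          = binom (I - 1) (w + α - I) * binom (2 * I - w - α - 1) (i + I - α) := by
        have tri := binom_trinom (n := I - 1) (j := w + i) (k := w + α - I)
          (show (0:ℤ) ≤ I - 1 by omega)
        rw [show I - 1 - (w + α - I) = 2 * I - w - α - 1 by ring,
          show w + i - (w + α - I) = i + I - α by ring] at tri
        rcases lt_or_ge (w + i) 0 with h | h
        · rw [← tri, binom_of_neg (show w + i < 0 from h), zero_mul, zero_mul]
        · rw [binom_symm (show (0:ℤ) ≤ w + i from h) (k := I - α + i),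
            show w + i - (I - α + i) = w + α - I by ring, tri]
      rw [show (0:ℤ) + w + i = w + i by ring, mul_assoc, hb]
      ring
    have eS3 : (∑ i ∈ Finset.Icc (1 : ℤ) (α - 1),
          ((i + 1).negOnePow : ℤ) * binom (I - 1) (w + i) * binom (0 + w + i) (I - α + i))
        = binom (I - 1) (w + α - I) *
            ((α.negOnePow : ℤ) * binom (2 * I - w - α - 2) (I - 1)
              + binom (2 * I - w - α - 2) (I - α)) := by
      rw [Finset.sum_congr rfl (fun i _ => key i), ← Finset.mul_sum]
      congr 1
      have emap : ∑ i ∈ Icc (1 : ℤ) (α - 1),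
            ((i + 1).negOnePow : ℤ) * binom (2 * I - w - α - 1) (i + I - α)
          = ∑ m ∈ Icc (I - α + 1) (I - 1),
              ((m + (α - I + 1)).negOnePow : ℤ) * binom (2 * I - w - α - 1) m := by
        rw [show Icc (I - α + 1) (I - 1) = (Icc (1 : ℤ) (α - 1)).map (addRightEmbedding (I - α))
            by rw [Finset.map_add_right_Icc]; congr 1 <;> ring]
        rw [Finset.sum_map]
        refine Finset.sum_congr rfl (fun i _ => ?_)
        rw [show addRightEmbedding (I - α) i = i + (I - α) from rfl]
        rw [show i + (I - α) + (α - I + 1) = i + 1 by ring,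
          show i + (I - α) = i + I - α by ring]
      rw [emap]
      have esplit : ∀ m : ℤ, ((m + (α - I + 1)).negOnePow : ℤ) * binom (2 * I - w - α - 1) m
          = ((α - I + 1).negOnePow : ℤ) *
              ((m.negOnePow : ℤ) * binom (2 * I - w - α - 1) m) := by
        intro m
        rw [Int.negOnePow_add]
        push_cast
        ring
      rw [Finset.sum_congr rfl (fun m _ => esplit m), ← Finset.mul_sum]
      rw [sum_Icc_split _ _ _ (fun m hm => by rw [binom_of_neg hm, mul_zero])
        (show (0:ℤ) ≤ I - 1 by omega) (show I - α + 1 ≤ I - 1 + 1 by omega)]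
      rw [show I - α + 1 - 1 = I - α by ring, alt_sum, alt_sum,
        show 2 * I - w - α - 1 - 1 = 2 * I - w - α - 2 by ring]
      rw [mul_sub, ← mul_assoc, ← mul_assoc]
      rw [← Units.val_mul, ← Int.negOnePow_add, show α - I + 1 + (I - 1) = α by ring]
      rw [← Units.val_mul, ← Int.negOnePow_add, show α - I + 1 + (I - α) = 1 by ring,
        Int.negOnePow_one]
      push_cast
      ring
    rw [e1, e2, eS3]
    rw [show I - (I - α) - α = 0 by ring, binom_zero_right, mul_one]
    rw [show w - (I - α) = w + α - I by ring,
      show I - α + I - w - 2 = 2 * I - w - α - 2 by ring,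
      show 2 * (I - α) - w - 2 + 0 + α = 2 * I - w - α - 2 by ring,
      show 2 * (I - α) - w - 1 + α = 2 * I - w - α - 1 by ring,
      show I - α + w + 1 + α = I + w + 1 by ring]
    -- now case analysis on K = w + α - I
    rcases lt_or_ge (w + α - I) 0 with hK | hK
    · rw [binom_of_neg hK, if_neg (by omega)]
      ring
    rcases lt_or_ge (I - 1) (w + α - I) with hK2 | hK2
    · rw [show binom (I - 1) (w + α - I) = 0 from binom_lt (by omega) hK2,
        if_pos (show I - α ≤ w by omega),
        show binom (2 * I - w - α - 2) (2 * I - w - α - 1) = 0 from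
          binom_of_neg (by omega)]
      ring
    rcases eq_or_lt_of_le hK2 with hKe | hKlt
    · -- K = I - 1, i.e. w = 2I - 1 - α
      rw [show w + α - I = I - 1 by omega, binom_self (by omega),
        show (2 : ℤ) * I - w - α - 2 = -1 by omega,
        show (2 : ℤ) * I - w - α - 1 = 0 by omega,
        binom_neg_one (show (0:ℤ) ≤ I - 1 by omega), binom_zero_right,
        if_pos (show I - α ≤ w by omega)]
      have hsgn : ((I + w + 1).negOnePow : ℤ)
          = -((α.negOnePow : ℤ) * ((I - 1).negOnePow : ℤ)) := by
        rw [show I + w + 1 = (α + (I - 1)) + (2 * (I - α) + 1) by omega,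
          Int.negOnePow_add, Int.negOnePow_add, Int.negOnePow_succ, Int.negOnePow_two_mul]
        push_cast
        ring
      rw [hsgn]
      ring
    · -- 0 ≤ K ≤ I - 2
      rw [show binom (2 * I - w - α - 2) (I - 1) = 0 from binom_lt (by omega) (by omega),
        if_pos (show I - α ≤ w by omega),
        show binom (2 * I - w - α - 2) (2 * I - w - α - 1) = 0 from
          binom_lt (by omega) (by omega)]
      ring
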